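/- arXiv:2006.10160 — 2 statements merged into one kernel-verified Lean document; each statement's English description precedes it below -/
import Mathlib

section
/- For any θ ∈ [0,1] and κ > 0, the function k(x, x') = cosh((|x - x'| - 1/2)/κ) / cosh(1/(2κ)), where |x - x'| denotes the distance on the circle ℝ/ℤ (i.e., min(|x-x'|, 1-|x-x'|) for representatives in [0,1)), has Fourier coefficients ρ(n) = (2 sinh(1/(2κ)) / (κ cosh(1/(2κ)))) · (1/κ² + 4π²n²)^{-1} for n ∈ ℤ; in particular all coefficients are nonnegative, so k is positive semi-definite on the circle. -/
open Real Complex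

lemma matern_frac (s b : ℂ) (h1 : 2*s + b ≠ 0) (h2 : b - 2*s ≠ 0)
    (h3 : 4*s^2 - b^2 ≠ 0) :
    1/(2*s+b) - 1/(b-2*s) = 4*s/(4*s^2-b^2) := by
  rw [div_sub_div _ _ h1 h2, div_eq_div_iff (mul_ne_zero h1 h2) h3]
  ring

lemma matern_alg (s b E : ℂ) (hE : E ≠ 0) (h1 : 2*s + b ≠ 0) (h2 : b - 2*s ≠ 0)
    (h3 : 4*s^2 - b^2 ≠ 0) :
    E⁻¹/2 * ((E*E - 1)/(2*s+b)) + E/2 * ((E⁻¹*E⁻¹ - 1)/(b-2*s))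
      = (E - E⁻¹)/2 * (4*s) / (4*s^2 - b^2) := by
  have e1 : E⁻¹ * (E*E - 1) = E - E⁻¹ := by field_simp
  have e2 : E * (E⁻¹*E⁻¹ - 1) = E⁻¹ - E := by field_simp
  have A : E⁻¹/2 * ((E*E - 1)/(2*s+b)) = (E - E⁻¹)/(2*(2*s+b)) := by
    rw [div_mul_div_comm, e1]
  have B : E/2 * ((E⁻¹*E⁻¹ - 1)/(b-2*s)) = (E⁻¹ - E)/(2*(b-2*s)) := by
    rw [div_mul_div_comm, e2]
  calc E⁻¹/2 * ((E*E - 1)/(2*s+b)) + E/2 * ((E⁻¹*E⁻¹ - 1)/(b-2*s))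
      = (E - E⁻¹)/(2*(2*s+b)) + (E⁻¹ - E)/(2*(b-2*s)) := by rw [A, B]
    _ = (E - E⁻¹)/2 * (1/(2*s+b) - 1/(b-2*s)) := by
        rw [mul_sub ((E - E⁻¹)/2) (1/(2*s+b)) (1/(b-2*s)),
          div_mul_div_comm (E - E⁻¹) 2 1 (2*s+b), div_mul_div_comm (E - E⁻¹) 2 1 (b-2*s),
          mul_one,
          sub_eq_add_neg ((E - E⁻¹)/(2*(2*s+b))) ((E - E⁻¹)/(2*(b-2*s))),
          ← neg_div, neg_sub]
    _ = (E - E⁻¹)/2 * (4*s/(4*s^2-b^2)) := by rw [matern_frac s b h1 h2 h3]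
    _ = (E - E⁻¹)/2 * (4*s) / (4*s^2 - b^2) := by ring

lemma matern_key (κ : ℝ) (hκ : 0 < κ) (n : ℤ) :
    (∫ t in (0:ℝ)..1,
        (Real.cosh ((t - 1/2) / κ) : ℂ) *
          Complex.exp (-2 * Real.pi * Complex.I * (n : ℂ) * (t : ℂ)))
      = ((2 * Real.sinh (1/(2*κ)) / κ) * (1/κ^2 + 4 * Real.pi^2 * (n:ℝ)^2)⁻¹ : ℝ) := by
  have hκ' : (κ : ℂ) ≠ 0 := by exact_mod_cast hκ.ne'
  set s : ℂ := ((1/(2*κ) : ℝ) : ℂ) with hs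
  have hs' : s = 1/(2*(κ:ℂ)) := by rw [hs]; push_cast; ring
  set b : ℂ := -2*(Real.pi:ℂ)*(n:ℂ)*Complex.I with hb
  have hre1 : (2*s + b).re = 1/κ := by
    rw [hs, hb]
    simp [Complex.add_re, Complex.mul_re]
    field_simp
  have h1 : 2*s + b ≠ 0 := by
    intro h
    rw [h, Complex.zero_re] at hre1
    exact (one_div_ne_zero hκ.ne') hre1.symm
  have hre2 : (b - 2*s).re = -(1/κ) := by
    rw [hs, hb]
    simp [Complex.sub_re, Complex.mul_re]
    field_simp
  have h2 : b - 2*s ≠ 0 := by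
    intro h
    rw [h, Complex.zero_re] at hre2
    have : (1:ℝ)/κ = 0 := by linarith
    exact (one_div_ne_zero hκ.ne') this
  have hb2 : b^2 = ((-(4*Real.pi^2*(n:ℝ)^2) : ℝ) : ℂ) := by
    rw [hb, mul_pow, Complex.I_sq]; push_cast; ring
  have hD : 4*s^2 - b^2 = (((1/κ^2 + 4 * Real.pi^2 * (n:ℝ)^2) : ℝ) : ℂ) := by
    rw [hb2, hs']; push_cast; field_simp; ring
  have hDr : (0:ℝ) < 1/κ^2 + 4 * Real.pi^2 * (n:ℝ)^2 := by positivity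
  have hD0 : 4*s^2 - b^2 ≠ 0 := by
    rw [hD]; exact_mod_cast hDr.ne'
  have hint : ∀ t : ℝ,
      (Real.cosh ((t - 1/2) / κ) : ℂ) *
          Complex.exp (-2 * Real.pi * Complex.I * (n : ℂ) * (t : ℂ))
        = Complex.exp (-s)/2 * Complex.exp ((2*s + b) * t)
          + Complex.exp s / 2 * Complex.exp ((b - 2*s) * t) := by
    intro t
    rw [Real.cosh_eq]
    push_cast
    rw [hs']
    rw [show ((t:ℂ) - 1/2)/(κ:ℂ) = 2*(1/(2*(κ:ℂ)))*t - 1/(2*(κ:ℂ)) from by field_simp]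
    rw [show -2 * (Real.pi:ℂ) * Complex.I * (n : ℂ) * (t : ℂ) = b * t from by rw [hb]; ring]
    set u : ℂ := 1/(2*(κ:ℂ)) with hu
    rw [show 2*u*(t:ℂ) - u = (2*u*t) + (-u) from by ring,
        show (2*u+b) * (t:ℂ) = (2*u*t) + b*t from by ring,
        show (b-2*u) * (t:ℂ) = -(2*u*t) + b*t from by ring,
        show -(2*u*(t:ℂ) + -u) = -(2*u*t) + u from by ring,
        Complex.exp_add, Complex.exp_add, Complex.exp_add, Complex.exp_add]
    ring
  simp_rw [hint]
  have hi : ∀ (c d : ℂ), IntervalIntegrable (fun t : ℝ => c * Complex.exp (d * t))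
      MeasureTheory.volume 0 1 := by
    intro c d
    apply Continuous.intervalIntegrable
    fun_prop
  rw [intervalIntegral.integral_add (hi _ _) (hi _ _),
      intervalIntegral.integral_const_mul, intervalIntegral.integral_const_mul,
      integral_exp_mul_complex h1, integral_exp_mul_complex h2]
  have hexpb : Complex.exp b = 1 := by
    rw [hb, show -2*(Real.pi:ℂ)*(n:ℂ)*Complex.I = (((-n : ℤ)):ℂ) * (2*Real.pi*Complex.I) from by
      push_cast; ring]
    exact Complex.exp_int_mul_two_pi_mul_I (-n)
  simp only [Complex.ofReal_one, Complex.ofReal_zero, mul_one, mul_zero, Complex.exp_zero]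
  rw [show 2*s + b = b + (s+s) from by ring, show b - 2*s = b + (-s + -s) from by ring]
  simp only [Complex.exp_add, hexpb, one_mul, Complex.exp_neg]
  rw [show b + (s+s) = 2*s+b from by ring, show b + (-s + -s) = b - 2*s from by ring]
  rw [matern_alg s b (Complex.exp s) (Complex.exp_ne_zero s) h1 h2 hD0, hD, Real.sinh_eq]
  push_cast
  rw [div_eq_mul_inv]
  congr 1
  rw [Complex.exp_neg, hs]
  push_cast
  field_simp [Complex.exp_ne_zero]
  ring

section MaternHelpers

lemma matern_cosh_min_eq (κ : ℝ) {t : ℝ} (h0 : 0 ≤ t) (h1 : t ≤ 1) :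
    Real.cosh ((min t (1 - t) - 1/2) / κ) = Real.cosh ((t - 1/2) / κ) := by
  rcases le_total t (1/2) with h | h
  · rw [min_eq_left (by linarith)]
  · rw [min_eq_right (by linarith),
      show (1 - t - 1/2)/κ = -((t - 1/2)/κ) by ring, Real.cosh_neg]

lemma matern_cosh_fract_eq (κ : ℝ) {t : ℝ} (h0 : 0 ≤ t) (h1 : t ≤ 1) :
    Real.cosh ((min (Int.fract t) (1 - Int.fract t) - 1/2) / κ)
      = Real.cosh ((t - 1/2) / κ) := by
  rcases eq_or_lt_of_le h1 with rfl | h1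
  · rw [Int.fract_one]
    norm_num
    rw [show (-(1/2) : ℝ)/κ = -((1 - 1/2)/κ) by ring, Real.cosh_neg]
    norm_num
  · rw [Int.fract_eq_self.mpr ⟨h0, h1⟩]
    exact matern_cosh_min_eq κ h0 h1.le

lemma matern_partA (κ : ℝ) (hκ : 0 < κ) (n : ℤ) :
    (∫ t in (0:ℝ)..1,
        (Real.cosh ((min t (1 - t) - 1/2) / κ) / Real.cosh (1/(2*κ)) : ℂ) *
          Complex.exp (-2 * Real.pi * Complex.I * (n : ℂ) * (t : ℂ)))
      = ((2 * Real.sinh (1/(2*κ)) / (κ * Real.cosh (1/(2*κ)))) *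
          (1/κ^2 + 4 * Real.pi^2 * (n:ℝ)^2)⁻¹ : ℝ) := by
  have hc : Real.cosh (1/(2*κ)) ≠ 0 := (Real.cosh_pos _).ne'
  have hEq : Set.EqOn
      (fun t : ℝ => (Real.cosh ((min t (1 - t) - 1/2) / κ) / Real.cosh (1/(2*κ)) : ℂ) *
          Complex.exp (-2 * Real.pi * Complex.I * (n : ℂ) * (t : ℂ)))
      (fun t : ℝ => ((Real.cosh (1/(2*κ)) : ℂ))⁻¹ *
          ((Real.cosh ((t - 1/2) / κ) : ℂ) *
            Complex.exp (-2 * Real.pi * Complex.I * (n : ℂ) * (t : ℂ))))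
      (Set.uIcc 0 1) := by
    intro t ht
    rw [Set.uIcc_of_le (by norm_num : (0:ℝ) ≤ 1)] at ht
    simp only
    rw [matern_cosh_min_eq κ ht.1 ht.2]
    push_cast
    ring
  rw [intervalIntegral.integral_congr hEq, intervalIntegral.integral_const_mul,
    matern_key κ hκ n]
  rw [← Complex.ofReal_inv, ← Complex.ofReal_mul]
  congr 1
  field_simp

end MaternHelpers

section MaternPSD

noncomputable def maternF (κ : ℝ) : C(AddCircle (1:ℝ), ℂ) :=
  ⟨fun z => ((Real.cosh ((‖z‖ - 1/2) / κ) / Real.cosh (1/(2*κ)) : ℝ) : ℂ), by fun_prop⟩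

lemma maternF_apply (κ : ℝ) (u : ℝ) :
    maternF κ ↑u = ((Real.cosh ((min (Int.fract u) (1 - Int.fract u) - 1/2) / κ) /
      Real.cosh (1/(2*κ)) : ℝ) : ℂ) := by
  simp only [maternF, ContinuousMap.coe_mk]
  rw [show ‖(↑u : AddCircle (1:ℝ))‖ = |u - round u| from UnitAddCircle.norm_eq,
    abs_sub_round_eq_min]

lemma maternF_coeff (κ : ℝ) (hκ : 0 < κ) (n : ℤ) :
    fourierCoeff (⇑(maternF κ)) n
      = ((2 * Real.sinh (1/(2*κ)) / (κ * Real.cosh (1/(2*κ)))) *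
          (1/κ^2 + 4 * Real.pi^2 * (n:ℝ)^2)⁻¹ : ℝ) := by
  have hc : Real.cosh (1/(2*κ)) ≠ 0 := (Real.cosh_pos _).ne'
  rw [fourierCoeff_eq_intervalIntegral (⇑(maternF κ)) n 0]
  rw [show (0:ℝ) + 1 = 1 by norm_num, show ((1:ℝ)/(1:ℝ)) = 1 by norm_num, one_smul]
  have hEq : Set.EqOn
      (fun t : ℝ => (fourier (-n) (↑t : AddCircle (1:ℝ)) : ℂ) • maternF κ ↑t)
      (fun t : ℝ => ((Real.cosh (1/(2*κ)) : ℂ))⁻¹ *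
          ((Real.cosh ((t - 1/2) / κ) : ℂ) *
            Complex.exp (-2 * Real.pi * Complex.I * (n : ℂ) * (t : ℂ))))
      (Set.uIcc 0 1) := by
    intro t ht
    rw [Set.uIcc_of_le (by norm_num : (0:ℝ) ≤ 1)] at ht
    simp only [smul_eq_mul]
    rw [maternF_apply, matern_cosh_fract_eq κ ht.1 ht.2, fourier_coe_apply]
    rw [show 2 * (Real.pi:ℂ) * Complex.I * (↑(-n) : ℂ) * (t:ℂ) / (1:ℝ)
        = -2 * Real.pi * Complex.I * (n : ℂ) * (t : ℂ) from by push_cast; ring]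
    push_cast
    ring
  rw [intervalIntegral.integral_congr hEq, intervalIntegral.integral_const_mul,
    matern_key κ hκ n]
  rw [← Complex.ofReal_inv, ← Complex.ofReal_mul]
  congr 1
  field_simp

lemma fourier_addCircle_add (n : ℤ) (u v : AddCircle (1:ℝ)) :
    (fourier n (u + v) : ℂ) = fourier n u * fourier n v := by
  rw [fourier_apply, fourier_apply, fourier_apply, smul_add, AddCircle.toCircle_add,
    Circle.coe_mul]

lemma fourier_addCircle_neg (n : ℤ) (v : AddCircle (1:ℝ)) :
    (fourier n (-v) : ℂ) = (starRingEnd ℂ) (fourier n v) := by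
  rw [fourier_apply, smul_neg, fourier_neg']

end MaternPSD

/-- The Matérn-1/2 kernel on the circle `ℝ/ℤ`:
`k(t) = cosh((dist - 1/2)/κ) / cosh(1/(2κ))` where `dist = min(t, 1-t)` for `t ∈ [0,1)`
is the circle distance. Its Fourier coefficients are
`ρ(n) = (2 sinh(1/(2κ)) / (κ cosh(1/(2κ)))) (1/κ² + 4π²n²)⁻¹ ≥ 0`, and `k` is
positive semi-definite on the circle. -/
theorem matern_half_circle_fourier_and_psd (κ : ℝ) (hκ : 0 < κ) :
    (∀ n : ℤ,
      (∫ t in (0:ℝ)..1,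
          (Real.cosh ((min t (1 - t) - 1/2) / κ) / Real.cosh (1/(2*κ)) : ℂ) *
            Complex.exp (-2 * Real.pi * Complex.I * (n : ℂ) * (t : ℂ)))
        = ((2 * Real.sinh (1/(2*κ)) / (κ * Real.cosh (1/(2*κ)))) *
            (1/κ^2 + 4 * Real.pi^2 * (n:ℝ)^2)⁻¹ : ℝ)) ∧
    (∀ n : ℤ, 0 ≤ (2 * Real.sinh (1/(2*κ)) / (κ * Real.cosh (1/(2*κ)))) *
        (1/κ^2 + 4 * Real.pi^2 * (n:ℝ)^2)⁻¹) ∧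
    (∀ (m : ℕ) (x : Fin m → ℝ) (c : Fin m → ℝ),
      0 ≤ ∑ i, ∑ j, c i * c j *
        (Real.cosh ((min (Int.fract (x i - x j)) (1 - Int.fract (x i - x j)) - 1/2) / κ) /
          Real.cosh (1/(2*κ)))) := by
  have hρ : ∀ n : ℤ, 0 ≤ (2 * Real.sinh (1/(2*κ)) / (κ * Real.cosh (1/(2*κ)))) *
      (1/κ^2 + 4 * Real.pi^2 * (n:ℝ)^2)⁻¹ := by
    intro n
    have hs : 0 ≤ Real.sinh (1/(2*κ)) := Real.sinh_nonneg_iff.mpr (by positivity)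
    have hc : 0 < Real.cosh (1/(2*κ)) := Real.cosh_pos _
    apply mul_nonneg
    · apply div_nonneg (by linarith) (by positivity)
    · apply inv_nonneg.2 (by positivity)
  refine ⟨fun n => matern_partA κ hκ n, hρ, ?_⟩
  intro m x c
  haveI : Fact ((0:ℝ) < (1:ℝ)) := ⟨zero_lt_one⟩
  set ρ : ℤ → ℝ := fun n => (2 * Real.sinh (1/(2*κ)) / (κ * Real.cosh (1/(2*κ)))) *
      (1/κ^2 + 4 * Real.pi^2 * (n:ℝ)^2)⁻¹ with hρdef
  have hcoeff : ∀ n : ℤ, fourierCoeff (⇑(maternF κ)) n = ((ρ n : ℝ) : ℂ) :=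
    fun n => maternF_coeff κ hκ n
  -- summability
  have hsum : Summable (fourierCoeff (⇑(maternF κ))) := by
    have h2 : Summable (fun n : ℤ => ρ n) := by
      have hbase : Summable (fun n : ℤ =>
          (2 * Real.sinh (1/(2*κ)) / (κ * Real.cosh (1/(2*κ)))) *
            ((4 * Real.pi^2)⁻¹ * (1 / (n:ℝ)^2))) := by
        exact ((summable_one_div_int_pow.mpr one_lt_two).mul_left _).mul_left _
      apply Summable.of_norm_bounded_eventually hbase
      rw [Filter.eventually_cofinite]
      apply Set.Finite.subset (Set.finite_singleton (0:ℤ))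
      intro n hn
      simp only [Set.mem_setOf_eq, not_le] at hn
      simp only [Set.mem_singleton_iff]
      by_contra hn0
      apply absurd hn
      push_neg
      have hn2 : (0:ℝ) < (n:ℝ)^2 := by
        have : (n:ℝ) ≠ 0 := Int.cast_ne_zero.mpr hn0
        positivity
      have hC : 0 ≤ 2 * Real.sinh (1/(2*κ)) / (κ * Real.cosh (1/(2*κ))) := by
        have hs : 0 ≤ Real.sinh (1/(2*κ)) := Real.sinh_nonneg_iff.mpr (by positivity)
        have hc : 0 < Real.cosh (1/(2*κ)) := Real.cosh_pos _
        apply div_nonneg (by linarith) (by positivity)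
      rw [Real.norm_eq_abs, _root_.abs_of_nonneg (hρ n)]
      apply mul_le_mul_of_nonneg_left _ hC
      rw [show (4 * Real.pi^2)⁻¹ * (1 / (n:ℝ)^2) = (4 * Real.pi^2 * (n:ℝ)^2)⁻¹ by
        rw [one_div, ← mul_inv]]
      apply inv_anti₀ (by positivity)
      have : 0 ≤ 1/κ^2 := by positivity
      linarith
    rw [show fourierCoeff (⇑(maternF κ)) = (fun n => ((ρ n : ℝ) : ℂ)) from funext hcoeff]
    exact Complex.summable_ofReal.mpr h2
  set sC : ℤ → ℂ := fun n => ∑ i, (c i : ℂ) * fourier n (↑(x i) : AddCircle (1:ℝ)) with hsC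
  have hpt : ∀ i j : Fin m, HasSum
      (fun n : ℤ => ((c i : ℂ) * (c j : ℂ)) *
        (fourierCoeff (⇑(maternF κ)) n • fourier n (↑(x i - x j) : AddCircle (1:ℝ))))
      (((c i : ℂ) * (c j : ℂ)) * maternF κ (↑(x i - x j) : AddCircle (1:ℝ))) :=
    fun i j => (has_pointwise_sum_fourier_series_of_summable hsum _).mul_left _
  have htot : HasSum
      (fun n : ℤ => ∑ i, ∑ j, ((c i : ℂ) * (c j : ℂ)) *
        (fourierCoeff (⇑(maternF κ)) n • fourier n (↑(x i - x j) : AddCircle (1:ℝ))))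
      (∑ i, ∑ j, ((c i : ℂ) * (c j : ℂ)) * maternF κ (↑(x i - x j) : AddCircle (1:ℝ))) :=
    hasSum_sum fun i _ => hasSum_sum fun j _ => hpt i j
  have hterm : ∀ n : ℤ,
      (∑ i, ∑ j, ((c i : ℂ) * (c j : ℂ)) *
        (fourierCoeff (⇑(maternF κ)) n • fourier n (↑(x i - x j) : AddCircle (1:ℝ))))
      = ((ρ n * Complex.normSq (sC n) : ℝ) : ℂ) := by
    intro n
    have hf : ∀ i j : Fin m, (fourier n (↑(x i - x j) : AddCircle (1:ℝ)) : ℂ)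
        = fourier n (↑(x i) : AddCircle (1:ℝ)) *
            (starRingEnd ℂ) (fourier n (↑(x j) : AddCircle (1:ℝ))) := by
      intro i j
      have hsub : ((x i - x j : ℝ) : AddCircle (1:ℝ)) = ↑(x i) + -↑(x j) := by
        rw [sub_eq_add_neg]
        rfl
      rw [hsub, fourier_addCircle_add, fourier_addCircle_neg]
    simp only [hcoeff, smul_eq_mul, hf]
    rw [show ((ρ n * Complex.normSq (sC n) : ℝ) : ℂ) = (ρ n : ℂ) * (sC n * (starRingEnd ℂ) (sC n)) by
      rw [Complex.mul_conj]; push_cast; ring]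
    rw [hsC]
    simp only [map_sum, map_mul, Complex.conj_ofReal]
    rw [Finset.sum_mul_sum, Finset.mul_sum]
    apply Finset.sum_congr rfl
    intro i _
    rw [Finset.mul_sum]
    apply Finset.sum_congr rfl
    intro j _
    ring
  simp_rw [hterm] at htot
  have hre := Complex.reCLM.hasSum htot
  simp only [Complex.reCLM_apply, Complex.ofReal_re] at hre
  have h0 : 0 ≤ (∑ i, ∑ j, ((c i : ℂ) * (c j : ℂ)) *
      maternF κ (↑(x i - x j) : AddCircle (1:ℝ))).re := by
    refine hasSum_le (fun n => ?_) hasSum_zero hre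
    exact mul_nonneg (hρ n) (Complex.normSq_nonneg _)
  have hfinal : (∑ i, ∑ j, ((c i : ℂ) * (c j : ℂ)) * maternF κ (↑(x i - x j) : AddCircle (1:ℝ)))
      = ((∑ i, ∑ j, c i * c j *
          (Real.cosh ((min (Int.fract (x i - x j)) (1 - Int.fract (x i - x j)) - 1/2) / κ) /
            Real.cosh (1/(2*κ))) : ℝ) : ℂ) := by
    push_cast
    apply Finset.sum_congr rfl
    intro i _
    apply Finset.sum_congr rfl
    intro j _
    rw [maternF_apply]
    push_cast
    ring
  rw [hfinal, Complex.ofReal_re] at h0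
  exact h0
end

section
/- For κ > 0 and d = x - x' ∈ [0, 1), the periodic-summation Matérn-1/2 kernel on the circle agrees (up to normalization) with the spectral-series kernel: sinh(1/(2κ))⁻¹ · cosh((d' - 1/2)/κ), where d' = min(d, 1-d), equals 2κ⁻¹ ∑_{n ∈ ℤ} (κ⁻² + 4π²n²)⁻¹ e^{2πin d}. -/
open Real Complex

lemma re_two_pi_I_int (n : ℤ) : (2 * (Real.pi:ℂ) * Complex.I * (n:ℂ)).re = 0 := by
  simp [Complex.mul_re, Complex.mul_im]

lemma alg_aux (u aa c : ℂ) (hu : u ≠ 0) (hc : c ≠ 0) (hc2 : c - 2*aa ≠ 0) :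
    u⁻¹/2 * ((u*u - 1)/c) + u/2 * (((u*u)⁻¹ - 1)/(c-2*aa))
      = 2*aa * ((u - u⁻¹)/2) * (c * -(c-2*aa))⁻¹ := by
  rw [div_mul_div_comm, div_mul_div_comm, div_add_div _ _ (mul_ne_zero two_ne_zero hc)
      (mul_ne_zero two_ne_zero hc2), ← div_eq_mul_inv,
    div_eq_div_iff (mul_ne_zero (mul_ne_zero two_ne_zero hc) (mul_ne_zero two_ne_zero hc2))
      (mul_ne_zero hc (neg_ne_zero.mpr hc2))]
  field_simp
  ring

lemma matern_integral (κ : ℝ) (hκ : 0 < κ) (n : ℤ) :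
    (∫ x in (0:ℝ)..1, Complex.exp (2 * Real.pi * Complex.I * (-n) * x) *
        ((Real.cosh ((x - 1/2)/κ) : ℝ) : ℂ))
      = (2/κ) * Real.sinh (1/(2*κ)) * ((1/κ^2 + 4 * Real.pi^2 * (n:ℝ)^2 : ℝ) : ℂ)⁻¹ := by
  have hκ' : (κ : ℂ) ≠ 0 := by exact_mod_cast hκ.ne'
  set a : ℂ := ((1/κ : ℝ) : ℂ) with ha
  have haR : a.re = 1/κ := by simp [ha]
  have hane : (1:ℝ)/κ ≠ 0 := by positivity
  set c₁ : ℂ := a - 2*Real.pi*Complex.I*n with hc1def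
  set c₂ : ℂ := -a - 2*Real.pi*Complex.I*n with hc2def
  have hc1 : c₁ ≠ 0 := by
    intro h
    have := congrArg Complex.re h
    simp [hc1def, Complex.sub_re, re_two_pi_I_int, haR] at this
    exact hκ.ne' this
  have hc2 : c₂ ≠ 0 := by
    intro h
    have := congrArg Complex.re h
    simp [hc2def, Complex.sub_re, Complex.neg_re, re_two_pi_I_int, haR] at this
    exact hκ.ne' this
  have hfun : (fun x : ℝ => Complex.exp (2 * Real.pi * Complex.I * (-n) * x) *
        ((Real.cosh ((x - 1/2)/κ) : ℝ) : ℂ))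
      = fun x : ℝ => Complex.exp (-(a/2)) / 2 * Complex.exp (c₁ * x)
          + Complex.exp (a/2) / 2 * Complex.exp (c₂ * x) := by
    funext x
    rw [Real.cosh_eq]
    push_cast
    rw [← mul_div_assoc, mul_add, ← Complex.exp_add, ← Complex.exp_add,
      div_mul_eq_mul_div, div_mul_eq_mul_div, ← Complex.exp_add, ← Complex.exp_add,
      ← add_div]
    congr 2
    · rw [hc1def, ha]
      push_cast
      congr 1
      field_simp
      ring
    · rw [hc2def, ha]
      push_cast
      congr 1
      field_simp
      ring
  rw [hfun]
  have hi1 : IntervalIntegrable (fun x : ℝ => Complex.exp (-(a/2)) / 2 * Complex.exp (c₁ * x))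
      MeasureTheory.volume 0 1 := by
    apply Continuous.intervalIntegrable
    fun_prop
  have hi2 : IntervalIntegrable (fun x : ℝ => Complex.exp (a/2) / 2 * Complex.exp (c₂ * x))
      MeasureTheory.volume 0 1 := by
    apply Continuous.intervalIntegrable
    fun_prop
  rw [intervalIntegral.integral_add hi1 hi2, intervalIntegral.integral_const_mul,
    intervalIntegral.integral_const_mul, integral_exp_mul_complex hc1,
    integral_exp_mul_complex hc2]
  have e1 : Complex.exp c₁ = Complex.exp a := by
    rw [show c₁ = a + ((-n : ℤ) : ℂ) * (2 * Real.pi * Complex.I) by rw [hc1def]; push_cast; ring,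
      Complex.exp_add, Complex.exp_int_mul_two_pi_mul_I, mul_one]
  have e2 : Complex.exp c₂ = Complex.exp (-a) := by
    rw [show c₂ = -a + ((-n : ℤ) : ℂ) * (2 * Real.pi * Complex.I) by rw [hc2def]; push_cast; ring,
      Complex.exp_add, Complex.exp_int_mul_two_pi_mul_I, mul_one]
  have hsinh : ((Real.sinh (1/(2*κ)) : ℝ) : ℂ)
      = (Complex.exp (a/2) - Complex.exp (-(a/2))) / 2 := by
    rw [Real.sinh_eq]
    push_cast
    rw [show ((1:ℂ)/(2*(κ:ℂ))) = a/2 from by rw [ha]; push_cast; ring]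
  have hden : ((1/κ^2 + 4 * Real.pi^2 * (n:ℝ)^2 : ℝ) : ℂ) = c₁ * (-c₂) := by
    rw [hc1def, hc2def, ha]
    push_cast
    linear_combination ((4:ℂ) * (Real.pi:ℂ)^2 * (n:ℂ)^2) * Complex.I_sq
  have hexpa : Complex.exp a = Complex.exp (a/2) * Complex.exp (a/2) := by
    rw [← Complex.exp_add]; ring_nf
  have hexpna : Complex.exp (-a) = (Complex.exp (a/2) * Complex.exp (a/2))⁻¹ := by
    rw [← hexpa, ← Complex.exp_neg]
  have hexpnh : Complex.exp (-(a/2)) = (Complex.exp (a/2))⁻¹ := Complex.exp_neg _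
  rw [hsinh, hden]
  simp only [Complex.ofReal_one, Complex.ofReal_zero, mul_one, mul_zero, Complex.exp_zero]
  rw [e1, e2, hexpa, hexpna, hexpnh]
  have hu : Complex.exp (a/2) ≠ 0 := Complex.exp_ne_zero _
  have hκκ : (2:ℂ)/κ = 2 * a := by rw [ha]; push_cast; field_simp
  rw [hκκ]
  have hA : a - 2*(Real.pi:ℂ)*Complex.I*n ≠ 0 := by rw [← hc1def]; exact hc1
  have hB : -a - 2*(Real.pi:ℂ)*Complex.I*n ≠ 0 := by rw [← hc2def]; exact hc2
  have hrel : c₂ = c₁ - 2*a := by rw [hc1def, hc2def]; ring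
  have hB' : c₁ - 2*a ≠ 0 := by rw [← hrel]; exact hc2
  clear_value a c₁ c₂
  rw [hrel]
  exact alg_aux _ _ _ hu hc1 hB'

local instance fact_zero_lt_one' : Fact ((0:ℝ) < 1) := ⟨one_pos⟩

lemma matern_fourierCoeff (κ : ℝ) (hκ : 0 < κ) (n : ℤ) :
    fourierCoeff (AddCircle.liftIco 1 0 (fun x : ℝ => ((Real.cosh ((x - 1/2)/κ) : ℝ) : ℂ))) n
      = (2/κ) * Real.sinh (1/(2*κ)) * ((1/κ^2 + 4 * Real.pi^2 * (n:ℝ)^2 : ℝ) : ℂ)⁻¹ := by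
  rw [fourierCoeff_liftIco_eq, fourierCoeffOn_eq_integral]
  simp only [fourier_coe_apply, zero_add, sub_zero, Complex.ofReal_one, div_one, Int.cast_neg,
    smul_eq_mul, one_div, inv_one, one_smul]
  have := matern_integral κ hκ n
  simp only [one_div] at this ⊢
  exact this

lemma matern_summable (κ : ℝ) (hκ : 0 < κ) :
    Summable (fun n : ℤ => ((1/κ^2 + 4 * Real.pi^2 * (n:ℝ)^2)⁻¹ : ℝ)) := by
  apply Summable.of_norm_bounded_eventually (g := fun n : ℤ => (4*Real.pi^2)⁻¹ * ((1:ℝ)/(n:ℝ)^2))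
  · exact ((summable_one_div_int_pow (p := 2)).mpr one_lt_two).mul_left _
  · filter_upwards [(Set.toFinite ({0} : Set ℤ)).eventually_cofinite_notMem] with n hn
    have hn' : (n:ℝ) ≠ 0 := Int.cast_ne_zero.mpr (by simpa using hn)
    rw [show ‖(1/κ^2 + 4 * Real.pi^2 * (n:ℝ)^2)⁻¹‖ = (1/κ^2 + 4 * Real.pi^2 * (n:ℝ)^2)⁻¹ from
      abs_of_nonneg (by positivity)]
    simp only [one_div]
    rw [← mul_inv]
    apply inv_anti₀ (by positivity)
    have h1 : (0:ℝ) < (κ^2)⁻¹ := by positivity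
    linarith

/-- Poisson-summation identity for the Matérn-1/2 kernel on the circle: for `κ > 0`
and `d = x - x' ∈ [0,1)`, with `d' = min(d, 1-d)` the circle distance,
`sinh(1/(2κ))⁻¹ cosh((d' - 1/2)/κ) = (2/κ) ∑_{n ∈ ℤ} (κ⁻² + 4π²n²)⁻¹ e^{2πind}`. -/
theorem matern_half_circle_poisson_summation (κ d : ℝ) (hκ : 0 < κ)
    (hd0 : 0 ≤ d) (hd1 : d < 1) :
    ((Real.sinh (1/(2*κ)))⁻¹ * Real.cosh ((min d (1 - d) - 1/2) / κ) : ℂ)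
      = (2 / κ : ℂ) * ∑' n : ℤ,
          (((1/κ^2 + 4 * Real.pi^2 * (n:ℝ)^2)⁻¹ : ℝ) : ℂ) *
            Complex.exp (2 * Real.pi * Complex.I * (n : ℂ) * (d : ℂ)) := by
  set g : ℝ → ℂ := fun x : ℝ => ((Real.cosh ((x - 1/2)/κ) : ℝ) : ℂ) with hg
  have hg01 : g 0 = g 1 := by
    simp only [hg]
    rw [show ((0:ℝ) - 1/2)/κ = -(((1:ℝ) - 1/2)/κ) by ring, Real.cosh_neg]
  set F : C(AddCircle 1, ℂ) := ⟨AddCircle.liftIco 1 0 g,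
    AddCircle.liftIco_zero_continuous hg01 (Continuous.continuousOn (by fun_prop))⟩ with hF
  set C : ℂ := (2/κ) * Real.sinh (1/(2*κ)) with hC
  have hcoeff : ∀ n : ℤ, fourierCoeff (⇑F) n
      = C * (((1/κ^2 + 4 * Real.pi^2 * (n:ℝ)^2)⁻¹ : ℝ) : ℂ) := by
    intro n
    have := matern_fourierCoeff κ hκ n
    rw [hF]
    show fourierCoeff (AddCircle.liftIco 1 0 g) n = _
    rw [hg, this, hC]
    push_cast
    ring
  have hsummable : Summable (fourierCoeff (⇑F)) := by
    apply Summable.congr ((Complex.summable_ofReal.mpr (matern_summable κ hκ)).mul_left C)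
    intro n
    rw [hcoeff n]
  have hps := has_pointwise_sum_fourier_series_of_summable hsummable ((d : ℝ) : AddCircle (1:ℝ))
  have hFd : F ((d : ℝ) : AddCircle (1:ℝ)) = g d := by
    show AddCircle.liftIco 1 0 g ↑d = g d
    exact AddCircle.liftIco_zero_coe_apply ⟨hd0, hd1⟩
  have hfour : ∀ n : ℤ, fourier n ((d : ℝ) : AddCircle (1:ℝ))
      = Complex.exp (2 * Real.pi * Complex.I * (n : ℂ) * (d : ℂ)) := by
    intro n
    rw [fourier_coe_apply]
    norm_num
  have hps' : HasSum (fun n : ℤ => C * ((((1/κ^2 + 4 * Real.pi^2 * (n:ℝ)^2)⁻¹ : ℝ) : ℂ) *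
      Complex.exp (2 * Real.pi * Complex.I * (n : ℂ) * (d : ℂ)))) (g d) := by
    rw [← hFd]
    apply hps.congr_fun
    intro n
    rw [hcoeff n, hfour n, smul_eq_mul]
    ring
  have hts : C * ∑' n : ℤ, ((((1/κ^2 + 4 * Real.pi^2 * (n:ℝ)^2)⁻¹ : ℝ) : ℂ) *
      Complex.exp (2 * Real.pi * Complex.I * (n : ℂ) * (d : ℂ))) = g d := by
    rw [← tsum_mul_left]
    exact hps'.tsum_eq
  have hmin : Real.cosh ((min d (1 - d) - 1/2) / κ) = Real.cosh ((d - 1/2)/κ) := by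
    rcases le_total d (1 - d) with h | h
    · rw [min_eq_left h]
    · rw [min_eq_right h, show (1 - d - 1/2)/κ = -((d - 1/2)/κ) by ring, Real.cosh_neg]
  have hsinh : Real.sinh (1/(2*κ)) ≠ 0 := (Real.sinh_pos_iff.mpr (by positivity)).ne'
  have hsinhC : ((Real.sinh (1/(2*κ)) : ℝ) : ℂ) ≠ 0 := Complex.ofReal_ne_zero.mpr hsinh
  rw [hmin, show ((Real.cosh ((d - 1/2)/κ) : ℝ) : ℂ) = g d from rfl, ← hts, hC]
  have key : ∀ (s c S : ℂ), s ≠ 0 → s⁻¹ * (c * s * S) = c * S := by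
    intro s c S hs
    field_simp
  rw [Complex.ofReal_inv]
  exact key _ _ _ hsinhC
end
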